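/- Let $\bar{k}$ be an algebraically closed field of characteristic different from $2$, let $g \geq 0$ be an integer, and let $\lambda$ be the linear map sending a linear form on $\bar{k}^{g+2}$ to the polynomial obtained by substituting $X^{i}$ for the $i$-th coordinate variable ($0 \le i \le g+1$). Let $u_1,v_1,w_1$ and $u_2,v_2,w_2$ be linear forms on $\bar{k}^{g+2}$ such that $w_1(x)^{2} - u_1(x)v_1(x) = w_2(x)^{2} - u_2(x)v_2(x)$ for all $x$, and suppose that $F = \lambda(w_1)^{2} - \lambda(u_1)\lambda(v_1)$ is a squarefree polynomial of degree at least $1$. Then there exists a $3\times 3$ matrix $A$ over $\bar{k}$ with $A^{*}\Omega A = \Omega$ such that the column triple $(u_2,v_2,w_2)$ equals $A$ applied to the column triple $(u_1,v_1,w_1)$; that is, the map $q_{\Omega} \colon t \mapsto w^{2}-uv$ is injective on $\mathbf{O}_3(\Omega)$-orbits of such triples. -/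

import Mathlib

open Matrix

/-- The symmetric matrix Ω with rows (0,-1/2,0), (-1/2,0,0), (0,0,1). -/
def Omega (k : Type*) [Field k] : Matrix (Fin 3) (Fin 3) k :=
  !![0, -(1/2), 0; -(1/2), 0, 0; 0, 0, 1]

/-- The linear map λ sending a linear form on `k^(g+2)` to the polynomial of
degree at most `g+1` obtained by substituting `X^i` for the `i`-th coordinate:
`λ(u) = ∑ u(eᵢ) Xⁱ`. -/
noncomputable def lam {k : Type*} [Field k] {g : ℕ}
    (u : (Fin (g + 2) → k) →ₗ[k] k) : Polynomial k :=
  ∑ i : Fin (g + 2), Polynomial.C (u (Pi.single i 1)) * Polynomial.X ^ (i : ℕ)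


set_option linter.unusedSectionVars false

noncomputable section
namespace O3aux
variable {k : Type*} [Field k]

def bf (x y : Fin 3 → k) : k := x 2 * y 2 - (x 0 * y 1 + x 1 * y 0) / 2

lemma bf_comm (x y : Fin 3 → k) : bf x y = bf y x := by unfold bf; ring

lemma bf_zero_right (x : Fin 3 → k) : bf x 0 = 0 := by simp [bf]

lemma bf_combo (x s t n : Fin 3 → k) (a b c : k) :
    bf x (a • s + b • t + c • n) = a * bf x s + b * bf x t + c * bf x n := by
  simp [bf, Pi.smul_apply, smul_eq_mul]; ring

def ncross (s t : Fin 3 → k) : Fin 3 → k :=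
  ![-2 * (s 2 * t 0 - s 0 * t 2), -2 * (s 1 * t 2 - s 2 * t 1), s 0 * t 1 - s 1 * t 0]

lemma bf_ncross_left (h2 : (2:k) ≠ 0) (s t : Fin 3 → k) : bf (ncross s t) s = 0 := by
  simp only [bf, ncross]
  simp only [Matrix.cons_val_zero, Matrix.cons_val_one, Matrix.head_cons,
    Matrix.cons_val_two, Matrix.tail_cons]
  field_simp
  ring

lemma bf_ncross_right (h2 : (2:k) ≠ 0) (s t : Fin 3 → k) : bf (ncross s t) t = 0 := by
  simp only [bf, ncross]
  simp only [Matrix.cons_val_zero, Matrix.cons_val_one, Matrix.head_cons,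
    Matrix.cons_val_two, Matrix.tail_cons]
  field_simp
  ring

lemma bf_ncross_self (h2 : (2:k) ≠ 0) (s t : Fin 3 → k) :
    bf (ncross s t) (ncross s t) = -4 * (bf s s * bf t t - bf s t ^ 2) := by
  simp only [bf, ncross]
  simp only [Matrix.cons_val_zero, Matrix.cons_val_one, Matrix.head_cons,
    Matrix.cons_val_two, Matrix.tail_cons]
  field_simp
  ring

def Pm (s t n : Fin 3 → k) : Matrix (Fin 3) (Fin 3) k :=
  !![s 0, t 0, n 0; s 1, t 1, n 1; s 2, t 2, n 2]

lemma transpose_Pm (s t n : Fin 3 → k) :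
    (Pm s t n)ᵀ = !![s 0, s 1, s 2; t 0, t 1, t 2; n 0, n 1, n 2] := by
  ext i j; fin_cases i <;> fin_cases j <;> rfl

lemma Pm_mulVec (s t n c : Fin 3 → k) :
    Pm s t n *ᵥ c = c 0 • s + c 1 • t + c 2 • n := by
  funext i
  fin_cases i <;>
    simp [Pm, Matrix.mulVec, dotProduct, Fin.sum_univ_three] <;> ring

lemma gram (h2 : (2:k) ≠ 0) (s t n : Fin 3 → k) :
    (Pm s t n)ᵀ * Omega k * Pm s t n =
      !![bf s s, bf s t, bf s n; bf t s, bf t t, bf t n; bf n s, bf n t, bf n n] := by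
  rw [transpose_Pm, Pm, show Omega k = !![0, -(1/2), 0; -(1/2), 0, 0; 0, 0, 1] from rfl,
    Matrix.mul_fin_three, Matrix.mul_fin_three]
  refine congrArg Matrix.of ?_
  refine Matrix.vec3_eq ?_ ?_ ?_ <;> refine Matrix.vec3_eq ?_ ?_ ?_ <;>
    · simp only [bf]
      field_simp
      ring

lemma bf_ncross_eq_det (h2 : (2:k) ≠ 0) (s t y : Fin 3 → k) :
    bf (ncross s t) y = (Pm s t y).det := by
  rw [Matrix.det_fin_three]
  simp only [bf, ncross, Pm]
  simp only [Matrix.cons_val_zero, Matrix.cons_val_one, Matrix.head_cons,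
    Matrix.cons_val_two, Matrix.tail_cons, Matrix.cons_val', Matrix.head_fin_const,
    Matrix.empty_val', Matrix.cons_val_fin_one, Matrix.of_apply]
  field_simp
  ring

lemma det_Pm_ne_zero (s t n : Fin 3 → k) (hD : bf s s * bf t t - bf s t ^ 2 ≠ 0)
    (h1 : bf s n = 0) (hb : bf t n = 0) (hn : n ≠ 0) : (Pm s t n).det ≠ 0 := by
  intro hdet
  obtain ⟨c, hc0, hc⟩ := (Matrix.exists_mulVec_eq_zero_iff).2 hdet
  rw [Pm_mulVec] at hc
  have e1 : c 0 * bf s s + c 1 * bf s t = 0 := by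
    have h := congrArg (bf s) hc
    rw [bf_combo] at h
    simpa [h1, bf_zero_right] using h
  have e2 : c 0 * bf s t + c 1 * bf t t = 0 := by
    have h := congrArg (bf t) hc
    rw [bf_combo, bf_comm t s] at h
    simpa [hb, bf_zero_right] using h
  have hc0' : c 0 = 0 := by
    have h := mul_eq_zero.1 (show c 0 * (bf s s * bf t t - bf s t ^ 2) = 0 by
      linear_combination bf t t * e1 - bf s t * e2)
    tauto
  have hc1' : c 1 = 0 := by
    have h := mul_eq_zero.1 (show c 1 * (bf s s * bf t t - bf s t ^ 2) = 0 by
      linear_combination bf s s * e2 - bf s t * e1)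
    tauto
  rw [hc0', hc1'] at hc
  simp only [zero_smul, zero_add] at hc
  rcases smul_eq_zero.1 hc with h | h
  · exact hc0 (funext fun i => by fin_cases i <;> simp [hc0', hc1', h])
  · exact hn h

lemma Omega_mulVec (y : Fin 3 → k) :
    Omega k *ᵥ y = ![-(1/2) * y 1, -(1/2) * y 0, y 2] := by
  funext i
  fin_cases i <;> simp [Omega, Matrix.mulVec, dotProduct, Fin.sum_univ_three]

lemma eq_zero_of_bf_cols (h2 : (2:k) ≠ 0) (s t n y : Fin 3 → k)
    (hdet : (Pm s t n).det ≠ 0) (h0 : bf s y = 0) (h1 : bf t y = 0) (hnn : bf n y = 0) :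
    y = 0 := by
  simp only [bf] at h0 h1 hnn
  have hz : (Pm s t n)ᵀ *ᵥ (Omega k *ᵥ y) = 0 := by
    rw [transpose_Pm, Omega_mulVec]
    refine funext fun i => ?_
    fin_cases i
    · simp [Matrix.mulVec, dotProduct, Fin.sum_univ_three]
      linear_combination h0
    · simp [Matrix.mulVec, dotProduct, Fin.sum_univ_three]
      linear_combination h1
    · simp [Matrix.mulVec, dotProduct, Fin.sum_univ_three]
      linear_combination hnn
  have hΩ : Omega k *ᵥ y = 0 := by
    by_contra hne
    have h := Matrix.exists_mulVec_eq_zero_iff.1 ⟨_, hne, hz⟩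
    rw [Matrix.det_transpose] at h
    exact hdet h
  rw [Omega_mulVec] at hΩ
  have k0 := congrFun hΩ 0
  have k1 := congrFun hΩ 1
  have k2 := congrFun hΩ 2
  simp at k0 k1 k2
  refine funext fun i => ?_
  fin_cases i <;> simp <;> tauto

lemma assemble {V : Type*} [AddCommGroup V] [Module k V]
    (T₁ T₂ : V →ₗ[k] (Fin 3 → k)) (s₁ t₁ n₁ s₂ t₂ n₂ : Fin 3 → k)
    (hg : (Pm s₁ t₁ n₁)ᵀ * Omega k * Pm s₁ t₁ n₁ = (Pm s₂ t₂ n₂)ᵀ * Omega k * Pm s₂ t₂ n₂)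
    (hdet₁ : (Pm s₁ t₁ n₁).det ≠ 0)
    (hspan : ∀ v : V, ∃ a b c : k,
      T₁ v = a • s₁ + b • t₁ + c • n₁ ∧ T₂ v = a • s₂ + b • t₂ + c • n₂) :
    ∃ A : Matrix (Fin 3) (Fin 3) k,
      Aᵀ * Omega k * A = Omega k ∧ ∀ v, A *ᵥ T₁ v = T₂ v := by
  set P₁ := Pm s₁ t₁ n₁ with hP₁
  set P₂ := Pm s₂ t₂ n₂ with hP₂
  have hu : IsUnit P₁.det := (isUnit_iff_ne_zero).2 hdet₁
  have hinv : P₁ * P₁⁻¹ = 1 := Matrix.mul_nonsing_inv _ hu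
  have hinv' : P₁⁻¹ * P₁ = 1 := Matrix.nonsing_inv_mul _ hu
  refine ⟨P₂ * P₁⁻¹, ?_, ?_⟩
  · have hg' : (P₂)ᵀ * (Omega k * (P₂ * P₁⁻¹)) = (P₁)ᵀ * (Omega k * (P₁ * P₁⁻¹)) := by
      simp only [← Matrix.mul_assoc]
      rw [hg]
    rw [Matrix.transpose_mul, Matrix.mul_assoc, Matrix.mul_assoc, hg', hinv, Matrix.mul_one,
      ← Matrix.mul_assoc, ← Matrix.transpose_mul, hinv, Matrix.transpose_one, Matrix.one_mul]
  · intro v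
    obtain ⟨a, b, c, hv1, hv2⟩ := hspan v
    have h1 : T₁ v = P₁ *ᵥ ![a, b, c] := by
      rw [hv1, hP₁, Pm_mulVec]; simp
    rw [h1, Matrix.mulVec_mulVec, Matrix.mul_assoc, hinv', Matrix.mul_one, hP₂, Pm_mulVec,
      hv2]
    simp

lemma four_ne (h2 : (2:k) ≠ 0) : (4:k) ≠ 0 := by
  have h := mul_ne_zero h2 h2
  norm_num at h
  exact h

lemma det_sq_eq (h2 : (2:k) ≠ 0) {P₁ P₂ : Matrix (Fin 3) (Fin 3) k}
    (hg : P₁ᵀ * Omega k * P₁ = P₂ᵀ * Omega k * P₂) : P₁.det ^ 2 = P₂.det ^ 2 := by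
  have hΩ : (Omega k).det = -(1/4) := by
    simp [Omega, Matrix.det_fin_three]
    rw [← mul_inv]
    norm_num
  have h := congrArg Matrix.det hg
  rw [Matrix.det_mul, Matrix.det_mul, Matrix.det_mul, Matrix.det_mul,
    Matrix.det_transpose, Matrix.det_transpose, hΩ] at h
  have h4 : -(1/4 : k) ≠ 0 := by
    simp only [ne_eq, neg_eq_zero, one_div, inv_eq_zero]
    exact four_ne h2
  refine mul_left_cancel₀ h4 ?_
  linear_combination h

lemma det_transfer (h2 : (2:k) ≠ 0) {P₁ P₂ : Matrix (Fin 3) (Fin 3) k}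
    (hg : P₁ᵀ * Omega k * P₁ = P₂ᵀ * Omega k * P₂) (hd : P₁.det ≠ 0) : P₂.det ≠ 0 := by
  intro h
  have := det_sq_eq h2 hg
  rw [h] at this
  simp at this
  exact hd this

lemma det_Pm_zero_right (s t : Fin 3 → k) : (Pm s t 0).det = 0 := by
  simp [Pm, Matrix.det_fin_three, Matrix.vecHead, Matrix.vecTail]

lemma main {V : Type*} [AddCommGroup V] [Module k V] (h2 : (2:k) ≠ 0)
    (T₁ T₂ : V →ₗ[k] (Fin 3 → k))
    (hβ : ∀ x y : V, bf (T₁ x) (T₁ y) = bf (T₂ x) (T₂ y))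
    (x₀ y₀ : V)
    (hD : bf (T₁ x₀) (T₁ x₀) * bf (T₁ y₀) (T₁ y₀) - bf (T₁ x₀) (T₁ y₀) ^ 2 ≠ 0) :
    ∃ A : Matrix (Fin 3) (Fin 3) k,
      Aᵀ * Omega k * A = Omega k ∧ ∀ v, A *ᵥ T₁ v = T₂ v := by
  by_cases hc : ∀ v : V, ∃ a b : k, T₁ v = a • T₁ x₀ + b • T₁ y₀
  · -- rank 2 case
    have hg : (Pm (T₁ x₀) (T₁ y₀) (ncross (T₁ x₀) (T₁ y₀)))ᵀ * Omega k *
          Pm (T₁ x₀) (T₁ y₀) (ncross (T₁ x₀) (T₁ y₀)) =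
        (Pm (T₂ x₀) (T₂ y₀) (ncross (T₂ x₀) (T₂ y₀)))ᵀ * Omega k *
          Pm (T₂ x₀) (T₂ y₀) (ncross (T₂ x₀) (T₂ y₀)) := by
      rw [gram h2, gram h2]
      refine congrArg Matrix.of ?_
      refine Matrix.vec3_eq ?_ ?_ ?_ <;> refine Matrix.vec3_eq ?_ ?_ ?_
      · exact hβ _ _
      · exact hβ _ _
      · rw [bf_comm, bf_ncross_left h2, bf_comm, bf_ncross_left h2]
      · exact hβ _ _
      · exact hβ _ _
      · rw [bf_comm, bf_ncross_right h2, bf_comm, bf_ncross_right h2]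
      · rw [bf_ncross_left h2, bf_ncross_left h2]
      · rw [bf_ncross_right h2, bf_ncross_right h2]
      · rw [bf_ncross_self h2, bf_ncross_self h2, hβ x₀ x₀, hβ y₀ y₀, hβ x₀ y₀]
    have hDn : bf (ncross (T₁ x₀) (T₁ y₀)) (ncross (T₁ x₀) (T₁ y₀)) ≠ 0 := by
      rw [bf_ncross_self h2]
      exact mul_ne_zero (by simpa using four_ne h2) hD
    have hn₁ : ncross (T₁ x₀) (T₁ y₀) ≠ (0 : Fin 3 → k) := by
      intro h
      exact hDn (by rw [h, bf_zero_right])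
    have hdet₁ : (Pm (T₁ x₀) (T₁ y₀) (ncross (T₁ x₀) (T₁ y₀))).det ≠ 0 := by
      refine det_Pm_ne_zero _ _ _ hD ?_ ?_ hn₁
      · rw [bf_comm]; exact bf_ncross_left h2 _ _
      · rw [bf_comm]; exact bf_ncross_right h2 _ _
    have hdet₂ := det_transfer h2 hg hdet₁
    have kernel : ∀ w : V, T₁ w = 0 → T₂ w = 0 := by
      intro w hw
      refine eq_zero_of_bf_cols h2 (T₂ x₀) (T₂ y₀) (ncross (T₂ x₀) (T₂ y₀)) (T₂ w) hdet₂
        ?_ ?_ ?_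
      · rw [← hβ x₀ w, hw, bf_zero_right]
      · rw [← hβ y₀ w, hw, bf_zero_right]
      · rw [bf_ncross_eq_det h2]
        have hgw : (Pm (T₁ x₀) (T₁ y₀) (T₁ w))ᵀ * Omega k * Pm (T₁ x₀) (T₁ y₀) (T₁ w) =
            (Pm (T₂ x₀) (T₂ y₀) (T₂ w))ᵀ * Omega k * Pm (T₂ x₀) (T₂ y₀) (T₂ w) := by
          rw [gram h2, gram h2]
          simp only [hβ]
        have hsq := det_sq_eq h2 hgw
        rw [hw, det_Pm_zero_right] at hsq
        have h20 : (Pm (T₂ x₀) (T₂ y₀) (T₂ w)).det ^ 2 = 0 := by rw [← hsq]; ring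
        simpa using h20
    have hspan : ∀ v : V, ∃ a b c : k,
        T₁ v = a • T₁ x₀ + b • T₁ y₀ + c • ncross (T₁ x₀) (T₁ y₀) ∧
        T₂ v = a • T₂ x₀ + b • T₂ y₀ + c • ncross (T₂ x₀) (T₂ y₀) := by
      intro v
      obtain ⟨a, b, hab⟩ := hc v
      refine ⟨a, b, 0, by rw [hab]; simp, ?_⟩
      have hw : T₁ (v - (a • x₀ + b • y₀)) = 0 := by
        simp [map_sub, map_add, _root_.map_smul, hab]
      have h0 := kernel _ hw
      simp only [map_sub, map_add, _root_.map_smul, sub_eq_zero] at h0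
      rw [h0]
      simp
    exact assemble T₁ T₂ _ _ _ _ _ _ hg hdet₁ hspan
  · -- rank 3 case
    push_neg at hc
    obtain ⟨z, hz⟩ := hc
    -- division-free orthogonalization, scaled by D
    have hD' : bf (T₁ x₀) (T₁ x₀) * bf (T₁ y₀) (T₁ y₀) - bf (T₁ x₀) (T₁ y₀) ^ 2 ≠ 0 := hD
    set z' := (bf (T₁ x₀) (T₁ x₀) * bf (T₁ y₀) (T₁ y₀) - bf (T₁ x₀) (T₁ y₀) ^ 2) • z
        - (bf (T₁ y₀) (T₁ y₀) * bf (T₁ x₀) (T₁ z) - bf (T₁ x₀) (T₁ y₀) * bf (T₁ y₀) (T₁ z)) • x₀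
        - (bf (T₁ x₀) (T₁ x₀) * bf (T₁ y₀) (T₁ z) - bf (T₁ x₀) (T₁ y₀) * bf (T₁ x₀) (T₁ z)) • y₀
      with hz'def
    have hTz' : T₁ z' =
        (-(bf (T₁ y₀) (T₁ y₀) * bf (T₁ x₀) (T₁ z) - bf (T₁ x₀) (T₁ y₀) * bf (T₁ y₀) (T₁ z))) • T₁ x₀
        + (-(bf (T₁ x₀) (T₁ x₀) * bf (T₁ y₀) (T₁ z) - bf (T₁ x₀) (T₁ y₀) * bf (T₁ x₀) (T₁ z))) • T₁ y₀
        + (bf (T₁ x₀) (T₁ x₀) * bf (T₁ y₀) (T₁ y₀) - bf (T₁ x₀) (T₁ y₀) ^ 2) • T₁ z := by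
      rw [hz'def]
      simp only [map_sub, _root_.map_smul]
      module
    have horx : bf (T₁ x₀) (T₁ z') = 0 := by
      rw [hTz', bf_combo]
      ring
    have hory : bf (T₁ y₀) (T₁ z') = 0 := by
      rw [hTz', bf_combo, bf_comm (T₁ y₀) (T₁ x₀)]
      ring
    have hn₁ : T₁ z' ≠ 0 := by
      intro h
      apply hz ((bf (T₁ y₀) (T₁ y₀) * bf (T₁ x₀) (T₁ z) - bf (T₁ x₀) (T₁ y₀) * bf (T₁ y₀) (T₁ z))
          / (bf (T₁ x₀) (T₁ x₀) * bf (T₁ y₀) (T₁ y₀) - bf (T₁ x₀) (T₁ y₀) ^ 2))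
        ((bf (T₁ x₀) (T₁ x₀) * bf (T₁ y₀) (T₁ z) - bf (T₁ x₀) (T₁ y₀) * bf (T₁ x₀) (T₁ z))
          / (bf (T₁ x₀) (T₁ x₀) * bf (T₁ y₀) (T₁ y₀) - bf (T₁ x₀) (T₁ y₀) ^ 2))
      have h' : (bf (T₁ x₀) (T₁ x₀) * bf (T₁ y₀) (T₁ y₀) - bf (T₁ x₀) (T₁ y₀) ^ 2) • T₁ z
          = (bf (T₁ y₀) (T₁ y₀) * bf (T₁ x₀) (T₁ z) - bf (T₁ x₀) (T₁ y₀) * bf (T₁ y₀) (T₁ z)) • T₁ x₀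
          + (bf (T₁ x₀) (T₁ x₀) * bf (T₁ y₀) (T₁ z) - bf (T₁ x₀) (T₁ y₀) * bf (T₁ x₀) (T₁ z)) • T₁ y₀ := by
        rw [← sub_eq_zero, ← h, hTz']
        module
      have h'' := congrArg (fun y => (bf (T₁ x₀) (T₁ x₀) * bf (T₁ y₀) (T₁ y₀) - bf (T₁ x₀) (T₁ y₀) ^ 2)⁻¹ • y) h'
      simp only [smul_add, smul_smul, inv_mul_cancel₀ hD', one_smul] at h''
      rw [inv_mul_eq_div, inv_mul_eq_div] at h''
      exact h'' 
    have hdet₁ : (Pm (T₁ x₀) (T₁ y₀) (T₁ z')).det ≠ 0 :=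
      det_Pm_ne_zero _ _ _ hD horx hory hn₁
    have hg : (Pm (T₁ x₀) (T₁ y₀) (T₁ z'))ᵀ * Omega k * Pm (T₁ x₀) (T₁ y₀) (T₁ z') =
        (Pm (T₂ x₀) (T₂ y₀) (T₂ z'))ᵀ * Omega k * Pm (T₂ x₀) (T₂ y₀) (T₂ z') := by
      rw [gram h2, gram h2]
      simp only [hβ]
    have hdet₂ := det_transfer h2 hg hdet₁
    have kernel : ∀ w : V, T₁ w = 0 → T₂ w = 0 := by
      intro w hw
      refine eq_zero_of_bf_cols h2 (T₂ x₀) (T₂ y₀) (T₂ z') (T₂ w) hdet₂ ?_ ?_ ?_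
      · rw [← hβ x₀ w, hw, bf_zero_right]
      · rw [← hβ y₀ w, hw, bf_zero_right]
      · rw [← hβ z' w, hw, bf_zero_right]
    have hu : IsUnit (Pm (T₁ x₀) (T₁ y₀) (T₁ z')).det := isUnit_iff_ne_zero.2 hdet₁
    have hspan : ∀ v : V, ∃ a b c : k,
        T₁ v = a • T₁ x₀ + b • T₁ y₀ + c • T₁ z' ∧
        T₂ v = a • T₂ x₀ + b • T₂ y₀ + c • T₂ z' := by
      intro v
      set cv := (Pm (T₁ x₀) (T₁ y₀) (T₁ z'))⁻¹ *ᵥ T₁ v with hcv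
      have he : T₁ v = cv 0 • T₁ x₀ + cv 1 • T₁ y₀ + cv 2 • T₁ z' := by
        rw [← Pm_mulVec, hcv, Matrix.mulVec_mulVec, Matrix.mul_nonsing_inv _ hu,
          Matrix.one_mulVec]
      refine ⟨cv 0, cv 1, cv 2, he, ?_⟩
      have hw : T₁ (v - (cv 0 • x₀ + cv 1 • y₀ + cv 2 • z')) = 0 := by
        simp only [map_sub, map_add, _root_.map_smul]
        rw [← he]
        simp
      have h0 := kernel _ hw
      simp only [map_sub, map_add, _root_.map_smul, sub_eq_zero] at h0
      exact h0
    exact assemble T₁ T₂ _ _ _ _ _ _ hg hdet₁ hspan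

def Tmap {g : ℕ} (u v w : (Fin (g + 2) → k) →ₗ[k] k) :
    (Fin (g + 2) → k) →ₗ[k] (Fin 3 → k) := LinearMap.pi ![u, v, w]

lemma bf_Tmap {g : ℕ} (u v w : (Fin (g + 2) → k) →ₗ[k] k) (x y : Fin (g + 2) → k) :
    bf (Tmap u v w x) (Tmap u v w y) = w x * w y - (u x * v y + v x * u y) / 2 := by
  simp [Tmap, bf, LinearMap.pi_apply]

lemma lam_eval {g : ℕ} (u : (Fin (g + 2) → k) →ₗ[k] k) (r : k) :
    (lam u).eval r = u (fun i => r ^ (i : ℕ)) := by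
  have hv : (fun i : Fin (g + 2) => r ^ (i : ℕ))
      = ∑ j : Fin (g + 2), (r ^ (j : ℕ)) • (Pi.single j (1 : k) : Fin (g + 2) → k) := by
    funext i
    rw [Finset.sum_apply]
    simp [Pi.single_apply]
  rw [lam, Polynomial.eval_finset_sum]
  simp only [Polynomial.eval_mul, Polynomial.eval_pow, Polynomial.eval_C, Polynomial.eval_X]
  rw [hv, map_sum]
  simp [smul_eq_mul, mul_comm]

end O3aux
end

open O3aux in
/-- Over an algebraically closed field of characteristic ≠ 2: if two triples of
linear forms on `k^(g+2)` give the same quadratic form `w² - uv`, and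
`F = λ(w₁)² - λ(u₁)λ(v₁)` is squarefree of degree at least 1, then there exists
`A ∈ O₃(Ω)` taking the column triple `(u₁,v₁,w₁)` to `(u₂,v₂,w₂)`: the map
`q_Ω` is injective on `O₃(Ω)`-orbits of such triples. -/
theorem exists_O3_matrix_of_same_quadratic_form {k : Type*} [Field k] [IsAlgClosed k]
    (h2 : (2 : k) ≠ 0) (g : ℕ)
    (u₁ v₁ w₁ u₂ v₂ w₂ : (Fin (g + 2) → k) →ₗ[k] k)
    (heq : ∀ x, w₁ x ^ 2 - u₁ x * v₁ x = w₂ x ^ 2 - u₂ x * v₂ x)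
    (hsf : Squarefree (lam w₁ ^ 2 - lam u₁ * lam v₁))
    (hdeg : 1 ≤ (lam w₁ ^ 2 - lam u₁ * lam v₁).degree) :
    ∃ A : Matrix (Fin 3) (Fin 3) k, Aᵀ * Omega k * A = Omega k ∧
      u₂ = A 0 0 • u₁ + A 0 1 • v₁ + A 0 2 • w₁ ∧
      v₂ = A 1 0 • u₁ + A 1 1 • v₁ + A 1 2 • w₁ ∧
      w₂ = A 2 0 • u₁ + A 2 1 • v₁ + A 2 2 • w₁ := by
  classical
  have qf : ∀ x, w₁ x ^ 2 - u₁ x * v₁ x = bf (Tmap u₁ v₁ w₁ x) (Tmap u₁ v₁ w₁ x) := by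
    intro x
    rw [bf_Tmap]
    field_simp
    ring
  have hβ : ∀ x y, bf (Tmap u₁ v₁ w₁ x) (Tmap u₁ v₁ w₁ y)
      = bf (Tmap u₂ v₂ w₂ x) (Tmap u₂ v₂ w₂ y) := by
    intro x y
    have h1 := heq (x + y)
    have hx := heq x
    have hy := heq y
    simp only [map_add] at h1
    rw [bf_Tmap, bf_Tmap]
    field_simp
    linear_combination h1 - hx - hy
  have hH : ∃ x y, bf (Tmap u₁ v₁ w₁ x) (Tmap u₁ v₁ w₁ x)
      * bf (Tmap u₁ v₁ w₁ y) (Tmap u₁ v₁ w₁ y)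
      - bf (Tmap u₁ v₁ w₁ x) (Tmap u₁ v₁ w₁ y) ^ 2 ≠ 0 := by
    by_contra hcon
    push_neg at hcon
    have hsq : ∃ m : (Fin (g + 2) → k) →ₗ[k] k,
        ∀ x, bf (Tmap u₁ v₁ w₁ x) (Tmap u₁ v₁ w₁ x) = m x ^ 2 := by
      by_cases hx : ∃ x₀, bf (Tmap u₁ v₁ w₁ x₀) (Tmap u₁ v₁ w₁ x₀) ≠ 0
      · obtain ⟨x₀, hx₀⟩ := hx
        obtain ⟨s, hs⟩ := IsAlgClosed.exists_pow_nat_eq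
          (bf (Tmap u₁ v₁ w₁ x₀) (Tmap u₁ v₁ w₁ x₀)) (n := 2) (by norm_num)
        have hs0 : s ≠ 0 := by
          intro h
          rw [h] at hs
          simp at hs
          exact hx₀ hs.symm
        refine ⟨s⁻¹ • (w₁ x₀ • w₁ - (u₁ x₀ / 2) • v₁ - (v₁ x₀ / 2) • u₁), fun x => ?_⟩
        have hm : (s⁻¹ • (w₁ x₀ • w₁ - (u₁ x₀ / 2) • v₁ - (v₁ x₀ / 2) • u₁)) x
            = s⁻¹ * bf (Tmap u₁ v₁ w₁ x₀) (Tmap u₁ v₁ w₁ x) := by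
          rw [bf_Tmap]
          simp only [LinearMap.smul_apply, LinearMap.sub_apply, smul_eq_mul]
          ring
        rw [hm]
        have e := hcon x₀ x
        field_simp
        linear_combination e + bf (Tmap u₁ v₁ w₁ x) (Tmap u₁ v₁ w₁ x) * hs
      · push_neg at hx
        exact ⟨0, fun x => by simp [hx x]⟩
    obtain ⟨m, hm⟩ := hsq
    have hFsq : lam w₁ ^ 2 - lam u₁ * lam v₁ = lam m ^ 2 := by
      apply Polynomial.funext
      intro r
      simp only [Polynomial.eval_sub, Polynomial.eval_mul, Polynomial.eval_pow, lam_eval]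
      rw [qf]
      exact hm _
    have hdvd : lam m * lam m ∣ lam w₁ ^ 2 - lam u₁ * lam v₁ := ⟨1, by rw [hFsq]; ring⟩
    have hunit := hsf _ hdvd
    have hFunit : IsUnit (lam w₁ ^ 2 - lam u₁ * lam v₁) := by
      rw [hFsq, sq]
      exact hunit.mul hunit
    have hd0 := Polynomial.degree_eq_zero_of_isUnit hFunit
    rw [hd0] at hdeg
    norm_num at hdeg
  obtain ⟨x₀, y₀, hD⟩ := hH
  obtain ⟨A, hA, hAT⟩ := main h2 (Tmap u₁ v₁ w₁) (Tmap u₂ v₂ w₂) hβ x₀ y₀ hD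
  have comp : ∀ (x : Fin (g + 2) → k) (i : Fin 3),
      A i 0 * u₁ x + A i 1 * v₁ x + A i 2 * w₁ x = Tmap u₂ v₂ w₂ x i := by
    intro x i
    have h := congrFun (hAT x) i
    rw [← h]
    simp [Tmap, Matrix.mulVec, dotProduct, Fin.sum_univ_three, LinearMap.pi_apply]
    try ring
  refine ⟨A, hA, ?_, ?_, ?_⟩
  · apply LinearMap.ext; intro x
    have h := comp x 0
    simp only [Tmap, LinearMap.pi_apply] at h
    simp only [LinearMap.add_apply, LinearMap.smul_apply, smul_eq_mul]
    simp at h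
    linear_combination -h
  · apply LinearMap.ext; intro x
    have h := comp x 1
    simp only [Tmap, LinearMap.pi_apply] at h
    simp only [LinearMap.add_apply, LinearMap.smul_apply, smul_eq_mul]
    simp at h
    linear_combination -h
  · apply LinearMap.ext; intro x
    have h := comp x 2
    simp only [Tmap, LinearMap.pi_apply] at h
    simp only [LinearMap.add_apply, LinearMap.smul_apply, smul_eq_mul]
    simp at h
    linear_combination -h
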